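/- Let a, b, c, d, e be complex numbers with a not an integer and e not a nonpositive integer, and extend the Pochhammer symbol by (a)_{-j} = 1/(a-j)_j. Then for all natural numbers m, n: (a)_{m-n}(b)_m(c)_n(d)_n/((e)_m m! n!) = ((a)_m(b)_m/((e)_m m!)) · ((-1)^n (c)_n (d)_n/((1-a)_n n!)) + ∑_{k=1}^{m} ∑_{l=1}^{min(k,n)} (-1)^{k+l} ((k-1)!/((l-1)! l! (k-l)!)) · ((b)_k (c)_l (d)_l/((1-a)_l (e)_k)) · ((a+k)_{m-k}(b+k)_{m-k}/((e+k)_{m-k}(m-k)!)) · ((-1)^{n-l}(c+l)_{n-l}(d+l)_{n-l}/((1-a+l)_{n-l}(n-l)!)). -/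
import Mathlib


open Finset

/-- Pochhammer symbol (rising factorial): `(a)_k = a (a+1) ⋯ (a+k-1)`. -/
noncomputable def poch (a : ℂ) (k : ℕ) : ℂ := ∏ j ∈ Finset.range k, (a + j)

/-- Generalized Pochhammer symbol for integer index:
`(a)_z` is the usual rising factorial for `z ≥ 0`, and `(a)_{-j} = 1/(a-j)_j`. -/
noncomputable def pochZ (a : ℂ) : ℤ → ℂ
  | Int.ofNat k => poch a k
  | Int.negSucc j => 1 / poch (a - (j + 1 : ℕ)) (j + 1)

lemma poch_zero (a : ℂ) : poch a 0 = 1 := by simp [poch]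

lemma poch_succ (a : ℂ) (n : ℕ) : poch a (n + 1) = poch a n * (a + n) := by
  simp [poch, Finset.prod_range_succ]

lemma poch_add (a : ℂ) (p q : ℕ) : poch a (p + q) = poch a p * poch (a + p) q := by
  unfold poch
  rw [Finset.prod_range_add]
  congr 1
  refine Finset.prod_congr rfl fun j _ => ?_
  push_cast; ring

lemma poch_one (a : ℂ) : poch a 1 = a := by simp [poch]

lemma poch_front (a : ℂ) (n : ℕ) : poch a (n + 1) = a * poch (a + 1) n := by
  rw [add_comm n 1, poch_add, poch_one]; norm_num

lemma poch_ne_zero {x : ℂ} (h : ∀ j : ℕ, x + j ≠ 0) (n : ℕ) : poch x n ≠ 0 :=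
  Finset.prod_ne_zero_iff.2 fun j _ => h j

lemma poch_cast (n k : ℕ) : poch (n : ℂ) k = (n.ascFactorial k : ℂ) := by
  induction k with
  | zero => simp [poch_zero]
  | succ k ih => rw [poch_succ, ih, Nat.ascFactorial_succ]; push_cast; ring

lemma poch_reflect (x : ℂ) (n : ℕ) : poch (1 - x) n = (-1) ^ n * poch (x - n) n := by
  induction n with
  | zero => simp [poch_zero]
  | succ n ih =>
    rw [poch_succ, ih, poch_front]
    have h1 : x - ((n + 1 : ℕ) : ℂ) + 1 = x - n := by push_cast; ring
    rw [h1]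
    push_cast; ring

lemma pochZ_natCast (a : ℂ) (t : ℕ) : pochZ a (t : ℤ) = poch a t := rfl

lemma pochZ_negSucc (a : ℂ) (j : ℕ) :
    pochZ a (Int.negSucc j) = 1 / poch (a - (j + 1 : ℕ)) (j + 1) := rfl

lemma pochZ_sub (a : ℂ) (ha' : ∀ s t : ℕ, poch (a - s) t ≠ 0) (m n : ℕ) :
    pochZ a ((m : ℤ) - n) = poch (a - n) m / poch (a - n) n := by
  rcases le_or_gt n m with h | h
  · have h1 : (m : ℤ) - n = ((m - n : ℕ) : ℤ) := by omega
    rw [h1, pochZ_natCast, eq_div_iff (ha' n n)]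
    have h2 : poch (a - n) m = poch (a - n) n * poch (a - n + n) (m - n) := by
      rw [← poch_add]; congr 1; omega
    have h3 : a - (n : ℂ) + n = a := by ring
    rw [h2, h3]; ring
  · have h1 : (m : ℤ) - n = Int.negSucc (n - m - 1) := by
      rw [Int.negSucc_eq]; push_cast; omega
    rw [h1, pochZ_negSucc]
    have hj : n - m - 1 + 1 = n - m := by omega
    rw [hj, div_eq_div_iff (ha' (n - m) (n - m)) (ha' n n)]
    have h2 : poch (a - n) n = poch (a - n) m * poch (a - n + m) (n - m) := by
      rw [← poch_add]; congr 1; omega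
    have h3 : a - (n : ℂ) + m = a - ((n - m : ℕ) : ℂ) := by
      rw [Nat.cast_sub h.le]; ring
    rw [h2, h3]; ring

lemma chu : ∀ (m : ℕ) (n x : ℂ),
    ∑ k ∈ range (m + 1), (-1 : ℂ) ^ k * (m.choose k : ℂ) * poch n k * poch (x + k) (m - k)
      = poch (x - n) m := by
  intro m
  induction m with
  | zero => intro n x; simp [poch_zero]
  | succ m ih =>
    intro n x
    rw [Finset.sum_range_succ']
    have h0 : (-1 : ℂ) ^ 0 * ((m+1).choose 0 : ℂ) * poch n 0 * poch (x + (0:ℕ)) (m + 1 - 0)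
        = poch x (m + 1) := by simp [poch_zero]
    have hsplit : ∀ j ∈ range (m + 1),
        (-1 : ℂ) ^ (j+1) * ((m+1).choose (j+1) : ℂ) * poch n (j+1) * poch (x + (j+1:ℕ)) (m + 1 - (j+1))
        = (-1 : ℂ) ^ (j+1) * (m.choose (j+1) : ℂ) * poch n (j+1) * poch (x + (j+1:ℕ)) (m - j)
          + (-(n * ((-1 : ℂ) ^ j * (m.choose j : ℂ) * poch (n+1) j * poch ((x+1) + j) (m - j)))) := by
      intro j hj
      have hc : ((m+1).choose (j+1) : ℂ) = (m.choose (j+1) : ℂ) + (m.choose j : ℂ) := by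
        rw [Nat.choose_succ_succ]; push_cast; ring
      have hmj : m + 1 - (j+1) = m - j := by omega
      have hn1 : poch n (j+1) = n * poch (n+1) j := poch_front n j
      have hx1 : poch (x + ((j+1 : ℕ) : ℂ)) (m - j) = poch ((x+1) + (j:ℕ)) (m - j) := by
        congr 1; push_cast; ring
      rw [hc, hmj, hx1]
      rw [hn1]
      ring
    rw [Finset.sum_congr rfl hsplit, Finset.sum_add_distrib, h0]
    have hB : ∑ j ∈ range (m+1),
        (-(n * ((-1 : ℂ) ^ j * (m.choose j : ℂ) * poch (n+1) j * poch ((x+1) + j) (m - j))))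
        = -(n * poch (x - n) m) := by
      have h := ih (n+1) (x+1)
      have hx : (x+1) - (n+1) = x - n := by ring
      rw [hx] at h
      rw [Finset.sum_neg_distrib, ← Finset.mul_sum, h]
    rw [hB]
    have hA : (∑ j ∈ range (m+1),
          (-1 : ℂ) ^ (j+1) * (m.choose (j+1) : ℂ) * poch n (j+1) * poch (x + (j+1:ℕ)) (m - j))
          + poch x (m + 1) = (x + m) * poch (x - n) m := by
      have e1 := Finset.sum_range_succ'
        (fun k => (-1 : ℂ) ^ k * (m.choose k : ℂ) * poch n k * poch (x + (k:ℕ)) (m + 1 - k)) (m+1)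
      simp only [Nat.succ_sub_succ] at e1
      have e2 : ∀ k ∈ range (m + 2),
          (-1 : ℂ) ^ k * (m.choose k : ℂ) * poch n k * poch (x + (k:ℕ)) (m + 1 - k)
          = ((-1 : ℂ) ^ k * (m.choose k : ℂ) * poch n k * poch (x + (k:ℕ)) (m - k)) * (x + m) := by
        intro k hk
        simp only [Finset.mem_range] at hk
        by_cases hkm : k ≤ m
        · have h1 : m + 1 - k = (m - k) + 1 := by omega
          rw [h1, poch_succ]
          have h2 : x + (k:ℂ) + ((m - k : ℕ) : ℂ) = x + m := by
            have : ((m - k : ℕ) : ℂ) = (m : ℂ) - k := by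
              rw [Nat.cast_sub hkm]
            rw [this]; ring
          rw [h2]; ring
        · have hk1 : k = m + 1 := by omega
          subst hk1
          simp [Nat.choose_succ_self]
      rw [Finset.sum_congr rfl e2] at e1
      have e3 : (∑ k ∈ range (m + 2),
            ((-1 : ℂ) ^ k * (m.choose k : ℂ) * poch n k * poch (x + (k:ℕ)) (m - k)) * (x + (m:ℂ)))
          = (∑ k ∈ range (m + 1),
            ((-1 : ℂ) ^ k * (m.choose k : ℂ) * poch n k * poch (x + (k:ℕ)) (m - k)) * (x + (m:ℂ)))
            + ((-1 : ℂ) ^ (m+1) * (m.choose (m+1) : ℂ) * poch n (m+1) *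
                poch (x + ((m+1:ℕ):ℂ)) (m - (m+1))) * (x + (m:ℂ)) :=
        Finset.sum_range_succ _ (m+1)
      rw [e3] at e1
      simp only [Nat.choose_succ_self, Nat.cast_zero, mul_zero, zero_mul, add_zero] at e1
      rw [← Finset.sum_mul, ih n x] at e1
      have h00 : (-1 : ℂ) ^ 0 * (m.choose 0 : ℂ) * poch n 0 * poch x (m + 1 - 0)
          = poch x (m + 1) := by simp [poch_zero]
      rw [h00] at e1
      linear_combination -e1
    rw [show poch (x - n) (m + 1) = poch (x - n) m * ((x - n) + (m : ℂ)) from poch_succ _ m]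
    linear_combination hA

lemma sum_Icc_one {M : Type*} [AddCommMonoid M] (g : ℕ → M) :
    ∀ K, ∑ l ∈ Icc 1 K, g l = ∑ j ∈ range K, g (j + 1) := by
  intro K
  induction K with
  | zero => simp
  | succ K ih =>
    rw [Finset.sum_Icc_succ_top (Nat.succ_le_succ (Nat.zero_le K)), ih, Finset.sum_range_succ]

lemma inner_vandermonde (k n : ℕ) (hk : 1 ≤ k) :
    ∑ l ∈ Icc 1 (min k n), (k - 1).choose (l - 1) * n.choose l = (k - 1 + n).choose k := by
  have h1 : ∑ l ∈ Icc 1 (min k n), (k - 1).choose (l - 1) * n.choose l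
      = ∑ l ∈ Icc 1 k, (k - 1).choose (l - 1) * n.choose l := by
    apply Finset.sum_subset
    · intro l hl; simp only [Finset.mem_Icc] at *; omega
    · intro l hl hl'
      simp only [Finset.mem_Icc] at hl hl'
      have : n < l := by omega
      rw [Nat.choose_eq_zero_of_lt this, mul_zero]
  rw [h1, sum_Icc_one]
  rw [Nat.add_choose_eq, Finset.Nat.sum_antidiagonal_eq_sum_range_succ_mk, Finset.sum_range_succ,
      Nat.choose_eq_zero_of_lt (by omega), Nat.zero_mul, add_zero, ← Finset.sum_range_reflect]
  apply Finset.sum_congr rfl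
  intro j hj
  simp only [Finset.mem_range] at hj
  simp only
  rw [show k - 1 - j + 1 - 1 = k - 1 - j from by omega, show k - 1 - j + 1 = k - j from by omega,
    Nat.choose_symm (show j ≤ k - 1 by omega)]

set_option maxHeartbeats 3200000 in
/-- Decomposition formula (3.17) for Horn's `H₂`, coefficient of `x^m y^n`. -/
theorem H2_decomposition (a b c d e : ℂ) (ha : ∀ z : ℤ, a ≠ (z : ℂ))
    (he : ∀ j : ℕ, e ≠ -(j : ℂ)) (m n : ℕ) :
    pochZ a ((m : ℤ) - n) * poch b m * poch c n * poch d n /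
        (poch e m * (m.factorial : ℂ) * (n.factorial : ℂ)) =
      poch a m * poch b m / (poch e m * (m.factorial : ℂ)) *
          ((-1 : ℂ) ^ n * poch c n * poch d n / (poch (1 - a) n * (n.factorial : ℂ))) +
        ∑ k ∈ Finset.Icc 1 m, ∑ l ∈ Finset.Icc 1 (min k n),
          (-1 : ℂ) ^ (k + l) *
            (((k - 1).factorial : ℂ) /
              (((l - 1).factorial : ℂ) * (l.factorial : ℂ) * ((k - l).factorial : ℂ))) *
            (poch b k * poch c l * poch d l / (poch (1 - a) l * poch e k)) *
            (poch (a + k) (m - k) * poch (b + k) (m - k) /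
              (poch (e + k) (m - k) * ((m - k).factorial : ℂ))) *
            ((-1 : ℂ) ^ (n - l) * poch (c + l) (n - l) * poch (d + l) (n - l) /
              (poch (1 - a + l) (n - l) * ((n - l).factorial : ℂ))) := by
  have haInt : ∀ z : ℤ, a + (z : ℂ) ≠ 0 := fun z h => ha (-z) (by push_cast; linear_combination h)
  have hfac : ∀ t : ℕ, (t.factorial : ℂ) ≠ 0 := fun t => Nat.cast_ne_zero.2 t.factorial_ne_zero
  have hpan : ∀ s t : ℕ, poch (a - s) t ≠ 0 := fun s t => poch_ne_zero (fun j => by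
    have h := haInt ((j : ℤ) - s)
    intro hcon; apply h; push_cast; linear_combination hcon) t
  have hp1a : ∀ t : ℕ, poch (1 - a) t ≠ 0 := fun t => poch_ne_zero (fun j => by
    have h := haInt (-(1 + j : ℤ)); intro hcon; apply h; push_cast; linear_combination -hcon) t
  have hp1al : ∀ s t : ℕ, poch (1 - a + s) t ≠ 0 := fun s t => poch_ne_zero (fun j => by
    have h := haInt (-(1 + s + j : ℤ)); intro hcon; apply h; push_cast; linear_combination -hcon) t
  have hpe : ∀ t : ℕ, poch e t ≠ 0 := fun t => poch_ne_zero (fun j => by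
    have h := he j; intro hcon; apply h; linear_combination hcon) t
  have hpek : ∀ s t : ℕ, poch (e + s) t ≠ 0 := fun s t => poch_ne_zero (fun j => by
    have h := he (s + j); intro hcon; apply h; push_cast; linear_combination hcon) t
  -- per (k, l) term identity, then inner Vandermonde sum
  have key : ∀ k ∈ Finset.Icc 1 m,
      (∑ l ∈ Finset.Icc 1 (min k n),
        (-1 : ℂ) ^ (k + l) *
          (((k - 1).factorial : ℂ) /
            (((l - 1).factorial : ℂ) * (l.factorial : ℂ) * ((k - l).factorial : ℂ))) *
          (poch b k * poch c l * poch d l / (poch (1 - a) l * poch e k)) *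
          (poch (a + k) (m - k) * poch (b + k) (m - k) /
            (poch (e + k) (m - k) * ((m - k).factorial : ℂ))) *
          ((-1 : ℂ) ^ (n - l) * poch (c + l) (n - l) * poch (d + l) (n - l) /
            (poch (1 - a + l) (n - l) * ((n - l).factorial : ℂ))))
      = ((-1 : ℂ) ^ n * poch b m * poch c n * poch d n /
          (poch e m * poch (1 - a) n * (m.factorial : ℂ) * (n.factorial : ℂ))) *
        ((-1 : ℂ) ^ k * (m.choose k : ℂ) * poch (n : ℂ) k * poch (a + k) (m - k)) := by
    intro k hk
    simp only [Finset.mem_Icc] at hk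
    have hterm : ∀ l ∈ Finset.Icc 1 (min k n),
        (-1 : ℂ) ^ (k + l) *
          (((k - 1).factorial : ℂ) /
            (((l - 1).factorial : ℂ) * (l.factorial : ℂ) * ((k - l).factorial : ℂ))) *
          (poch b k * poch c l * poch d l / (poch (1 - a) l * poch e k)) *
          (poch (a + k) (m - k) * poch (b + k) (m - k) /
            (poch (e + k) (m - k) * ((m - k).factorial : ℂ))) *
          ((-1 : ℂ) ^ (n - l) * poch (c + l) (n - l) * poch (d + l) (n - l) /
            (poch (1 - a + l) (n - l) * ((n - l).factorial : ℂ)))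
        = (((-1 : ℂ) ^ n * poch b m * poch c n * poch d n /
            (poch e m * poch (1 - a) n * (m.factorial : ℂ) * (n.factorial : ℂ))) *
          ((-1 : ℂ) ^ k * (m.choose k : ℂ) * (k.factorial : ℂ) * poch (a + k) (m - k))) *
          (((k - 1).choose (l - 1) * n.choose l : ℕ) : ℂ) := by
      intro l hl
      simp only [Finset.mem_Icc, le_min_iff] at hl
      have hl1 : 1 ≤ l := hl.1
      have hlk : l ≤ k := hl.2.1
      have hln : l ≤ n := hl.2.2
      have hbm : poch b m = poch b k * poch (b + k) (m - k) := by
        have h := poch_add b k (m - k)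
        rw [show k + (m - k) = m from by omega] at h; exact h
      have hem : poch e m = poch e k * poch (e + k) (m - k) := by
        have h := poch_add e k (m - k)
        rw [show k + (m - k) = m from by omega] at h; exact h
      have hcn : poch c n = poch c l * poch (c + l) (n - l) := by
        have h := poch_add c l (n - l)
        rw [show l + (n - l) = n from by omega] at h; exact h
      have hdn : poch d n = poch d l * poch (d + l) (n - l) := by
        have h := poch_add d l (n - l)
        rw [show l + (n - l) = n from by omega] at h; exact h
      have h1an : poch (1 - a) n = poch (1 - a) l * poch (1 - a + l) (n - l) := by
        have h := poch_add (1 - a) l (n - l)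
        rw [show l + (n - l) = n from by omega] at h; exact h
      have hmf : (m.factorial : ℂ)
          = (m.choose k : ℂ) * (k.factorial : ℂ) * ((m - k).factorial : ℂ) := by
        exact_mod_cast congrArg (Nat.cast (R := ℂ))
          (Nat.choose_mul_factorial_mul_factorial hk.2).symm
      have hnf : (n.factorial : ℂ)
          = (n.choose l : ℂ) * (l.factorial : ℂ) * ((n - l).factorial : ℂ) := by
        exact_mod_cast congrArg (Nat.cast (R := ℂ))
          (Nat.choose_mul_factorial_mul_factorial hln).symm
      have hkf : ((k - 1).factorial : ℂ)
          = ((k - 1).choose (l - 1) : ℂ) * ((l - 1).factorial : ℂ) * ((k - l).factorial : ℂ) := by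
        have h := Nat.choose_mul_factorial_mul_factorial
          (show l - 1 ≤ k - 1 by omega)
        rw [show k - 1 - (l - 1) = k - l from by omega] at h
        exact_mod_cast congrArg (Nat.cast (R := ℂ)) h.symm
      have hsgn : (-1 : ℂ) ^ n = (-1 : ℂ) ^ (n - l) * (-1 : ℂ) ^ l := by
        rw [← pow_add]; congr 1; omega
      have hpow : (-1 : ℂ) ^ (k + l) = (-1 : ℂ) ^ k * (-1 : ℂ) ^ l := by rw [pow_add]
      have hDL : ((((l - 1).factorial : ℂ) * (l.factorial : ℂ) * ((k - l).factorial : ℂ)) *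
          (poch (1 - a) l * poch e k) * (poch (e + k) (m - k) * ((m - k).factorial : ℂ)) *
          (poch (1 - a + l) (n - l) * ((n - l).factorial : ℂ))) ≠ 0 := by
        refine mul_ne_zero (mul_ne_zero (mul_ne_zero (mul_ne_zero (mul_ne_zero (hfac _) (hfac _))
          (hfac _)) (mul_ne_zero (hp1a _) (hpe _))) (mul_ne_zero (hpek _ _) (hfac _)))
          (mul_ne_zero (hp1al _ _) (hfac _))
      have hDR : (poch e m * poch (1 - a) n * (m.factorial : ℂ) * (n.factorial : ℂ)) ≠ 0 :=
        mul_ne_zero (mul_ne_zero (mul_ne_zero (hpe _) (hp1a _)) (hfac _)) (hfac _)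
      have hLf : (-1 : ℂ) ^ (k + l) *
          (((k - 1).factorial : ℂ) /
            (((l - 1).factorial : ℂ) * (l.factorial : ℂ) * ((k - l).factorial : ℂ))) *
          (poch b k * poch c l * poch d l / (poch (1 - a) l * poch e k)) *
          (poch (a + k) (m - k) * poch (b + k) (m - k) /
            (poch (e + k) (m - k) * ((m - k).factorial : ℂ))) *
          ((-1 : ℂ) ^ (n - l) * poch (c + l) (n - l) * poch (d + l) (n - l) /
            (poch (1 - a + l) (n - l) * ((n - l).factorial : ℂ)))
          = ((-1 : ℂ) ^ (k + l) * ((k - 1).factorial : ℂ) *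
              (poch b k * poch c l * poch d l) *
              (poch (a + k) (m - k) * poch (b + k) (m - k)) *
              ((-1 : ℂ) ^ (n - l) * poch (c + l) (n - l) * poch (d + l) (n - l))) /
            ((((l - 1).factorial : ℂ) * (l.factorial : ℂ) * ((k - l).factorial : ℂ)) *
              (poch (1 - a) l * poch e k) * (poch (e + k) (m - k) * ((m - k).factorial : ℂ)) *
              (poch (1 - a + l) (n - l) * ((n - l).factorial : ℂ))) := by
        ring
      have hRf : (((-1 : ℂ) ^ n * poch b m * poch c n * poch d n /
            (poch e m * poch (1 - a) n * (m.factorial : ℂ) * (n.factorial : ℂ))) *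
          ((-1 : ℂ) ^ k * (m.choose k : ℂ) * (k.factorial : ℂ) * poch (a + k) (m - k))) *
          (((k - 1).choose (l - 1) * n.choose l : ℕ) : ℂ)
          = ((-1 : ℂ) ^ n * poch b m * poch c n * poch d n *
              ((-1 : ℂ) ^ k * (m.choose k : ℂ) * (k.factorial : ℂ) * poch (a + k) (m - k)) *
              (((k - 1).choose (l - 1) : ℂ) * (n.choose l : ℂ))) /
            (poch e m * poch (1 - a) n * (m.factorial : ℂ) * (n.factorial : ℂ)) := by
        push_cast
        ring
      rw [hLf, hRf, div_eq_div_iff hDL hDR]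
      rw [hbm, hem, hcn, hdn, h1an, hmf, hnf, hkf, hsgn, hpow]
      ring
    rw [Finset.sum_congr rfl hterm, ← Finset.mul_sum]
    rw [← Nat.cast_sum, inner_vandermonde k n hk.1, poch_cast]
    have hnat : n.ascFactorial k = k.factorial * ((k - 1 + n).choose k) := by
      rw [Nat.ascFactorial_eq_factorial_mul_choose']
      congr 2; omega
    rw [hnat]
    push_cast
    ring
  rw [Finset.sum_congr rfl key]
  have hfirst : poch a m * poch b m / (poch e m * (m.factorial : ℂ)) *
          ((-1 : ℂ) ^ n * poch c n * poch d n / (poch (1 - a) n * (n.factorial : ℂ)))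
      = ((-1 : ℂ) ^ n * poch b m * poch c n * poch d n /
          (poch e m * poch (1 - a) n * (m.factorial : ℂ) * (n.factorial : ℂ))) *
        ((-1 : ℂ) ^ 0 * (m.choose 0 : ℂ) * poch (n : ℂ) 0 * poch (a + ((0 : ℕ) : ℂ)) (m - 0)) := by
    simp only [pow_zero, Nat.choose_zero_right, Nat.cast_one, poch_zero, Nat.cast_zero,
      add_zero, Nat.sub_zero, one_mul, mul_one]
    simp only [div_eq_mul_inv, mul_inv]
    ring
  rw [hfirst, ← Finset.mul_sum, ← mul_add]
  have hchu := chu m (n : ℂ) a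
  have hrange : Finset.range (m + 1) = insert 0 (Finset.Icc 1 m) := by
    ext x; simp only [Finset.mem_range, Finset.mem_insert, Finset.mem_Icc]; omega
  rw [hrange, Finset.sum_insert (by simp)] at hchu
  rw [hchu]
  rw [pochZ_sub a hpan m n, poch_reflect a n]
  have hneg : (-1 : ℂ) ^ n ≠ 0 := pow_ne_zero _ (by norm_num)
  have hD1 : poch (a - (n : ℂ)) n * (poch e m * (m.factorial : ℂ) * (n.factorial : ℂ)) ≠ 0 :=
    mul_ne_zero (hpan n n) (mul_ne_zero (mul_ne_zero (hpe m) (hfac m)) (hfac n))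
  have hD2 : poch e m * ((-1 : ℂ) ^ n * poch (a - (n : ℂ)) n) * (m.factorial : ℂ) *
      (n.factorial : ℂ) ≠ 0 :=
    mul_ne_zero (mul_ne_zero (mul_ne_zero (hpe m) (mul_ne_zero hneg (hpan n n))) (hfac m)) (hfac n)
  have hL : poch (a - (n : ℂ)) m / poch (a - (n : ℂ)) n * poch b m * poch c n * poch d n /
        (poch e m * (m.factorial : ℂ) * (n.factorial : ℂ))
      = (poch (a - (n : ℂ)) m * poch b m * poch c n * poch d n) /
        (poch (a - (n : ℂ)) n * (poch e m * (m.factorial : ℂ) * (n.factorial : ℂ))) := by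
    ring
  have hR : (-1 : ℂ) ^ n * poch b m * poch c n * poch d n /
        (poch e m * ((-1 : ℂ) ^ n * poch (a - (n : ℂ)) n) * (m.factorial : ℂ) *
          (n.factorial : ℂ)) * poch (a - (n : ℂ)) m
      = ((-1 : ℂ) ^ n * poch b m * poch c n * poch d n * poch (a - (n : ℂ)) m) /
        (poch e m * ((-1 : ℂ) ^ n * poch (a - (n : ℂ)) n) * (m.factorial : ℂ) *
          (n.factorial : ℂ)) := by
    ring
  rw [hL, hR, div_eq_div_iff hD1 hD2]
  ring
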